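/- Theorem 3.2(iii) (O(1/√k) rate of Q-based regularity): Assume 2ν > β. Let (x_k) be a sequence in H satisfying the G-FBS iteration Q x_k − B x_k − Q x_{k+1} ∈ A x_{k+1} for every k ∈ ℕ, and let x⋆ ∈ H satisfy −B x⋆ ∈ A x⋆. Then for every k ∈ ℕ, ⟪Q(x_{k+1} − x_k), x_{k+1} − x_k⟫ ≤ (1/(k+1)) · (2ν/(2ν − β)) · ⟪Q(x_0 − x⋆), x_0 − x⋆⟫; equivalently, ‖x_{k+1} − x_k‖_Q ≤ (1/√(k+1)) · √(2ν/(2ν − β)) · ‖x_0 − x⋆‖_Q. -/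

import Mathlib

open RealInnerProductSpace

private lemma qexp {H : Type*} [NormedAddCommGroup H] [InnerProductSpace ℝ H]
    (Q : H →L[ℝ] H) (hQsym : ∀ x y : H, ⟪Q x, y⟫ = ⟪x, Q y⟫) (a b : H) :
    ⟪Q (a + b), a + b⟫ = ⟪Q a, a⟫ + 2 * ⟪Q a, b⟫ + ⟪Q b, b⟫ := by
  have h : ⟪Q b, a⟫ = ⟪Q a, b⟫ := by rw [hQsym, real_inner_comm]
  simp only [map_add, inner_add_left, inner_add_right]
  linarith

private lemma qyoung {H : Type*} [NormedAddCommGroup H] [InnerProductSpace ℝ H]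
    (Q : H →L[ℝ] H) (hQsym : ∀ x y : H, ⟪Q x, y⟫ = ⟪x, Q y⟫)
    (hQpos : ∀ x : H, 0 ≤ ⟪Q x, x⟫) (a b : H) (t : ℝ) (ht : 0 < t) :
    2 * ⟪Q a, b⟫ ≤ t * ⟪Q a, a⟫ + t⁻¹ * ⟪Q b, b⟫ := by
  have h := hQpos (a + (-t⁻¹) • b)
  rw [qexp Q hQsym] at h
  simp only [map_smul, real_inner_smul_left, real_inner_smul_right,
    ContinuousLinearMap.map_smul] at h
  have h1 : t * t⁻¹ = 1 := mul_inv_cancel₀ (ne_of_gt ht)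
  have h2 := mul_nonneg ht.le h
  have e : t * (⟪Q a, a⟫ + 2 * (-t⁻¹ * ⟪Q a, b⟫) + -t⁻¹ * (-t⁻¹ * ⟪Q b, b⟫))
      = t * ⟪Q a, a⟫ - (t * t⁻¹) * (2 * ⟪Q a, b⟫) + (t * t⁻¹) * (t⁻¹ * ⟪Q b, b⟫) := by
    ring
  rw [e, h1] at h2
  linarith

private lemma qpre {H : Type*} [NormedAddCommGroup H] [InnerProductSpace ℝ H] [CompleteSpace H]
    (Q : H →L[ℝ] H) (ν : ℝ) (hν : 0 < ν)
    (hνQ : ∀ w ∈ (LinearMap.ker (Q : H →ₗ[ℝ] H))ᗮ, ν * ‖w‖ ≤ ‖Q w‖)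
    (u : H) (hu : u ∈ Set.range Q) :
    ∃ z : H, Q z = u ∧ ν * ⟪Q z, z⟫ ≤ ‖u‖ ^ 2 := by
  obtain ⟨w, hw⟩ := hu
  set K : Submodule ℝ H := LinearMap.ker (Q : H →ₗ[ℝ] H) with hK
  haveI : CompleteSpace K := (ContinuousLinearMap.isClosed_ker Q).completeSpace_coe
  refine ⟨w - (K.orthogonalProjection w : H), ?_, ?_⟩
  · have hm : ((K.orthogonalProjection w : H)) ∈ K := (K.orthogonalProjection w).2
    have : Q ((K.orthogonalProjection w : H)) = 0 := hm
    simp [map_sub, this, hw]; exact this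
  · set z := w - (K.orthogonalProjection w : H) with hz
    have hzK : z ∈ Kᗮ := K.sub_starProjection_mem_orthogonal w
    have h1 : ν * ‖z‖ ≤ ‖Q z‖ := hνQ z hzK
    have h2 : ⟪Q z, z⟫ ≤ ‖Q z‖ * ‖z‖ := real_inner_le_norm _ _
    have hQz : Q z = u := by
      have hm : ((K.orthogonalProjection w : H)) ∈ K := (K.orthogonalProjection w).2
      have : Q ((K.orthogonalProjection w : H)) = 0 := hm
      simp [hz, map_sub, this, hw]; exact this
    rw [hQz] at h1 h2 ⊢
    have hz0 : 0 ≤ ‖z‖ := norm_nonneg _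
    have hu0 : 0 ≤ ‖u‖ := norm_nonneg _
    nlinarith [mul_le_mul_of_nonneg_left h2 hν.le, mul_le_mul_of_nonneg_left h1 hu0]

set_option maxHeartbeats 2000000 in
/-- Theorem 3.2(iii): `O(1/√k)` rate of `Q`-based regularity of the G-FBS iteration. -/
theorem stmt_11
    {H : Type*} [NormedAddCommGroup H] [InnerProductSpace ℝ H] [CompleteSpace H]
    (Q : H →L[ℝ] H)
    (hQsym : ∀ x y : H, ⟪Q x, y⟫ = ⟪x, Q y⟫)
    (hQpos : ∀ x : H, 0 ≤ ⟪Q x, x⟫)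
    (ν : ℝ) (hν : 0 < ν)
    (hνQ : ∀ w ∈ (LinearMap.ker (Q : H →ₗ[ℝ] H))ᗮ, ν * ‖w‖ ≤ ‖Q w‖)
    (β : ℝ) (hβ : 0 ≤ β)
    (hνβ : β < 2 * ν)
    (B : H → H)
    (hB : ∀ x y : H, ‖B x - B y‖ ^ 2 ≤ β * ⟪B x - B y, x - y⟫)
    (hranB : Set.range B ⊆ Set.range Q)
    (A : H → Set H)
    (hA : ∀ x y u v : H, u ∈ A x → v ∈ A y → 0 ≤ ⟪u - v, x - y⟫)
    (x : ℕ → H)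
    (hiter : ∀ k : ℕ, Q (x k) - B (x k) - Q (x (k + 1)) ∈ A (x (k + 1)))
    (xs : H) (hxs : -B xs ∈ A xs) :
    ∀ k : ℕ, ⟪Q (x (k + 1) - x k), x (k + 1) - x k⟫ ≤
      (1 / ((k : ℝ) + 1)) * (2 * ν / (2 * ν - β)) * ⟪Q (x 0 - xs), x 0 - xs⟫ := by
  -- difference of B values lies in range of Q
  have hranB' : ∀ a b : H, B a - B b ∈ Set.range Q := by
    intro a b
    obtain ⟨p, hp⟩ := hranB (Set.mem_range_self a)
    obtain ⟨q, hq⟩ := hranB (Set.mem_range_self b)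
    exact ⟨p - q, by rw [map_sub, hp, hq]⟩
  have hsw : ∀ a b : H, ⟪Q a, b⟫ = ⟪Q b, a⟫ := by
    intro a b; rw [hQsym, real_inner_comm]
  -- F2 : monotone decrease of D
  have F2 : ∀ k : ℕ, ⟪Q (x (k+1+1) - x (k+1)), x (k+1+1) - x (k+1)⟫ ≤
      ⟪Q (x (k+1) - x k), x (k+1) - x k⟫ := by
    intro k
    set d0 : H := x (k+1) - x k with hd0
    set d1 : H := x (k+1+1) - x (k+1) with hd1
    set Δ : H := B (x k) - B (x (k+1)) with hΔ
    obtain ⟨z, hQz, hzb⟩ := qpre Q ν hν hνQ Δ (hranB' _ _)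
    have hmon := hA (x (k+1+1)) (x (k+1)) _ _ (hiter (k+1)) (hiter k)
    have hvec : (Q (x (k+1)) - B (x (k+1)) - Q (x (k+1+1))) - (Q (x k) - B (x k) - Q (x (k+1)))
        = Q d0 - Q d1 + Δ := by
      simp only [hd0, hd1, hΔ, map_sub]; abel
    rw [hvec] at hmon
    have hmon' : 0 ≤ ⟪Q d0, d1⟫ - ⟪Q d1, d1⟫ + ⟪Δ, d1⟫ := by
      have : x (k+1+1) - x (k+1) = d1 := rfl
      rw [this] at hmon
      simpa [inner_add_left, inner_sub_left] using hmon
    -- Δ inner with d1 via z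
    have hΔd1 : ⟪Δ, d1⟫ = ⟪Q z, d1⟫ := by rw [hQz]
    -- young with t = 1
    have hy := qyoung Q hQsym hQpos (d0 + z) d1 1 one_pos
    rw [qexp Q hQsym d0 z] at hy
    have hy' : ⟪Q (d0 + z), d1⟫ = ⟪Q d0, d1⟫ + ⟪Q z, d1⟫ := by
      rw [map_add, inner_add_left]
    rw [hy'] at hy
    simp only [one_mul, inv_one] at hy
    -- so: D1 ≤ D0 + 2⟪Q d0, z⟫ + ⟪Q z, z⟫
    have key : ⟪Q d1, d1⟫ ≤ ⟪Q d0, d0⟫ + 2 * ⟪Q d0, z⟫ + ⟪Q z, z⟫ := by linarith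
    -- cocoercivity
    have hc := hB (x k) (x (k+1))
    have hxd : x k - x (k+1) = -d0 := by rw [hd0]; abel
    rw [hxd, inner_neg_right] at hc
    have hQd0z : ⟪Q d0, z⟫ = ⟪Δ, d0⟫ := by
      rw [hsw, hQz]
    -- claim: 2⟪Δ, d0⟫ + ⟪Q z, z⟫ ≤ 0
    have hN : (0:ℝ) ≤ ‖Δ‖^2 := sq_nonneg _
    have hPz : (0:ℝ) ≤ ⟪Q z, z⟫ := hQpos z
    have claim : 2 * ⟪Δ, d0⟫ + ⟪Q z, z⟫ ≤ 0 := by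
      rcases eq_or_lt_of_le hβ with h0 | hbp
      · -- β = 0
        have hΔ0 : ‖Δ‖^2 ≤ 0 := by rw [← h0] at hc; simpa using hc
        have hΔe : Δ = 0 := by
          have : ‖Δ‖ = 0 := by nlinarith [norm_nonneg Δ]
          exact norm_eq_zero.mp this
        have h1 : ν * ⟪Q z, z⟫ ≤ 0 := by rw [hΔe] at hzb; simpa using hzb
        have h2 : ⟪Δ, d0⟫ = 0 := by rw [hΔe]; simp
        nlinarith
      · nlinarith [mul_le_mul_of_nonneg_left hc hν.le,
          mul_le_mul_of_nonneg_left hzb hbp.le,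
          mul_nonneg hN (sub_nonneg.mpr hνβ.le), mul_pos hbp hν]
    rw [hQd0z] at key
    linarith
  -- F1 : Fejér-type inequality
  have F1 : ∀ k : ℕ, ⟪Q (x (k+1) - xs), x (k+1) - xs⟫
      + (1 - β/(2*ν)) * ⟪Q (x (k+1) - x k), x (k+1) - x k⟫ ≤ ⟪Q (x k - xs), x k - xs⟫ := by
    intro k
    set d0 : H := x (k+1) - x k with hd0
    set e1 : H := x (k+1) - xs with he1
    set Δ : H := B (x k) - B xs with hΔ
    obtain ⟨z, hQz, hzb⟩ := qpre Q ν hν hνQ Δ (hranB' _ _)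
    have hmon := hA (x (k+1)) xs _ _ (hiter k) hxs
    have hvec : (Q (x k) - B (x k) - Q (x (k+1))) - (-B xs) = -(Q d0) - Δ := by
      simp only [hd0, hΔ, map_sub]; abel
    rw [hvec] at hmon
    have hmon' : ⟪Q d0, e1⟫ + ⟪Δ, e1⟫ ≤ 0 := by
      have : x (k+1) - xs = e1 := rfl
      rw [this] at hmon
      simp only [inner_sub_left, inner_neg_left] at hmon
      linarith
    -- identity: E k = E(k+1) - 2⟪Q d0, e1⟫ + D k
    have hEid : ⟪Q (x k - xs), x k - xs⟫
        = ⟪Q e1, e1⟫ - 2 * ⟪Q d0, e1⟫ + ⟪Q d0, d0⟫ := by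
      have hv : x k - xs = e1 + -d0 := by rw [he1, hd0]; abel
      rw [hv, qexp Q hQsym]
      have h1 : ⟪Q e1, -d0⟫ = -⟪Q d0, e1⟫ := by rw [inner_neg_right, hsw]
      have h2 : ⟪Q (-d0), -d0⟫ = ⟪Q d0, d0⟫ := by rw [map_neg, inner_neg_neg]
      rw [h1, h2]; ring
    -- cocoercivity
    have hc := hB (x k) xs
    -- split ⟪Δ, e1⟫
    have hsplit : ⟪Δ, e1⟫ = ⟪Δ, x k - xs⟫ + ⟪Δ, d0⟫ := by
      have : e1 = (x k - xs) + d0 := by rw [he1, hd0]; abel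
      rw [this, inner_add_right]
    have hPd : (0:ℝ) ≤ ⟪Q d0, d0⟫ := hQpos d0
    have hPz : (0:ℝ) ≤ ⟪Q z, z⟫ := hQpos z
    have hN : (0:ℝ) ≤ ‖Δ‖^2 := sq_nonneg _
    -- claim : -2⟪Δ, e1⟫ ≤ (β/(2ν)) * ⟪Q d0, d0⟫
    have claim : -(2 * ⟪Δ, e1⟫) ≤ (β/(2*ν)) * ⟪Q d0, d0⟫ := by
      rcases eq_or_lt_of_le hβ with h0 | hbp
      · have hΔ0 : ‖Δ‖^2 ≤ 0 := by rw [← h0] at hc; simpa using hc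
        have hΔe : Δ = 0 := by
          have : ‖Δ‖ = 0 := by nlinarith [norm_nonneg Δ]
          exact norm_eq_zero.mp this
        rw [hΔe] at hsplit ⊢
        simp only [inner_zero_left] at hsplit ⊢
        rw [← h0]
        simp [hPd]
      · -- β > 0
        have ht : (0:ℝ) < 2*ν/β := by positivity
        have hy := qyoung Q hQsym hQpos z (-d0) (2*ν/β) ht
        have hinv : (2*ν/β)⁻¹ = β/(2*ν) := by
          rw [inv_div]
        have hzn : ⟪Q z, -d0⟫ = -⟪Δ, d0⟫ := by rw [inner_neg_right, hQz]
        have hnn : ⟪Q (-d0), -d0⟫ = ⟪Q d0, d0⟫ := by rw [map_neg, inner_neg_neg]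
        rw [hinv, hzn, hnn] at hy
        -- t * ⟪Qz,z⟫ ≤ (2/β) ‖Δ‖²
        have ht1 : (2*ν/β) * ⟪Q z, z⟫ ≤ (2/β) * ‖Δ‖^2 := by
          have := mul_le_mul_of_nonneg_left hzb (le_of_lt (show (0:ℝ) < 2/β by positivity))
          calc (2*ν/β) * ⟪Q z, z⟫ = (2/β) * (ν * ⟪Q z, z⟫) := by ring
            _ ≤ (2/β) * ‖Δ‖^2 := this
        -- -2⟪Δ, x k - xs⟫ ≤ -(2/β)‖Δ‖²
        have ht2 : (2/β) * ‖Δ‖^2 ≤ 2 * ⟪Δ, x k - xs⟫ := by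
          have := mul_le_mul_of_nonneg_left hc (le_of_lt (show (0:ℝ) < 2/β by positivity))
          calc (2/β) * ‖Δ‖^2 ≤ (2/β) * (β * ⟪Δ, x k - xs⟫) := this
            _ = 2 * ⟪Δ, x k - xs⟫ := by field_simp
        rw [hsplit]
        linarith
    linarith
  -- nonnegativity
  have hE : ∀ k : ℕ, (0:ℝ) ≤ ⟪Q (x k - xs), x k - xs⟫ := fun k => hQpos _
  set c : ℝ := 1 - β/(2*ν) with hc
  have hcpos : 0 < c := by
    rw [hc]
    have : β/(2*ν) < 1 := by
      rw [div_lt_one (by linarith)]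
      exact hνβ
    linarith
  -- main induction
  have P : ∀ k : ℕ, ((k:ℝ)+1) * c * ⟪Q (x (k+1) - x k), x (k+1) - x k⟫
      ≤ ⟪Q (x 0 - xs), x 0 - xs⟫ - ⟪Q (x (k+1) - xs), x (k+1) - xs⟫ := by
    intro k
    induction k with
    | zero =>
      have := F1 0
      push_cast
      linarith
    | succ n ih =>
      have h2 := F2 n
      have h1 := F1 (n+1)
      have hmul := mul_le_mul_of_nonneg_left h2
        (mul_nonneg (by positivity : (0:ℝ) ≤ (n:ℝ)+1) hcpos.le)
      push_cast
      push_cast at ih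
      nlinarith [hcpos]
  intro k
  have hk1 : (0:ℝ) < (k:ℝ)+1 := by positivity
  have key : ((k:ℝ)+1) * c * ⟪Q (x (k+1) - x k), x (k+1) - x k⟫ ≤ ⟪Q (x 0 - xs), x 0 - xs⟫ := by
    have := P k
    have := hE (k+1)
    linarith
  have hne : 2*ν - β ≠ 0 := by linarith
  have hνne : (2:ℝ)*ν ≠ 0 := by linarith
  have heq : (1/((k:ℝ)+1)) * (2*ν/(2*ν-β)) * ⟪Q (x 0 - xs), x 0 - xs⟫
      = ⟪Q (x 0 - xs), x 0 - xs⟫ / (((k:ℝ)+1) * c) := by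
    rw [hc]
    field_simp
  rw [heq]
  rw [le_div_iff₀ (by positivity)]
  calc ⟪Q (x (k+1) - x k), x (k+1) - x k⟫ * (((k:ℝ)+1) * c)
      = ((k:ℝ)+1) * c * ⟪Q (x (k+1) - x k), x (k+1) - x k⟫ := by ring
    _ ≤ ⟪Q (x 0 - xs), x 0 - xs⟫ := key
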